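/- If A, B ∈ L(X) are such that A* has an eigenvalue and B has an eigenvalue, then the generalised derivation τ_{A,B}(T) = AT - TB is not hypercyclic on L(X) (with the operator norm topology). -/

import Mathlib

/-- if `A*` and `B` both have eigenvalues then the generalised
derivation `T ↦ AT - TB` is not hypercyclic on `L(X)`. -/
theorem stmt_6 {X : Type*} [NormedAddCommGroup X] [NormedSpace ℂ X] [CompleteSpace X]
    (A B : X →L[ℂ] X)
    (xs : X →L[ℂ] ℂ) (hxs : xs ≠ 0) (α : ℂ) (hA : xs.comp A = α • xs)
    (x : X) (hx : x ≠ 0) (β : ℂ) (hB : B x = β • x) :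
    ∀ T₀ : X →L[ℂ] X,
      ¬ Dense (Set.range fun n : ℕ => (fun T => A.comp T - T.comp B)^[n] T₀) := by
  intro T₀ hdense
  -- The functional φ(T) = xs (T x)
  set φ : (X →L[ℂ] X) →L[ℂ] ℂ := xs.comp (ContinuousLinearMap.apply ℂ X x) with hφ
  have hφval : ∀ T : X →L[ℂ] X, φ T = xs (T x) := fun T => rfl
  -- key eigenvalue computation
  have key : ∀ n : ℕ, φ ((fun T => A.comp T - T.comp B)^[n] T₀)
      = (α - β) ^ n * φ T₀ := by
    intro n
    induction n with
    | zero => simp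
    | succ n ih =>
      rw [Function.iterate_succ_apply']
      set S := (fun T => A.comp T - T.comp B)^[n] T₀ with hS
      have h1 : xs (A (S x)) = α * xs (S x) := by
        have := congrArg (fun f : X →L[ℂ] ℂ => f (S x)) hA
        simpa using this
      have h2 : xs (S (B x)) = β * xs (S x) := by
        rw [hB, map_smul, map_smul, smul_eq_mul]
      simp only [hφval, ContinuousLinearMap.sub_apply, ContinuousLinearMap.comp_apply,
        map_sub, h1, h2] at *
      rw [ih]
      ring
  -- φ is surjective
  have hsurj : Function.Surjective φ := by
    intro w
    obtain ⟨y, hy⟩ : ∃ y : X, xs y ≠ 0 := by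
      by_contra h
      push_neg at h
      exact hxs (ContinuousLinearMap.ext fun y => by simp [h y])
    obtain ⟨f, hf1, hfx⟩ := exists_dual_vector ℂ x (norm_ne_zero_iff.mpr hx)
    refine ⟨f.smulRight ((w / ((‖x‖ : ℂ) * xs y)) • y), ?_⟩
    have hxnorm : (‖x‖ : ℂ) ≠ 0 := by
      simpa using norm_ne_zero_iff.mpr hx
    simp only [hφval, ContinuousLinearMap.smulRight_apply, hfx, map_smul, smul_eq_mul]
    field_simp
    exact mul_comm _ _
  -- hence range of (φ ∘ orbit) is dense
  have hd2 : DenseRange (fun n : ℕ => (α - β) ^ n * φ T₀) := by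
    have := DenseRange.comp (hsurj.denseRange) hdense φ.continuous
    have heq : (φ ∘ fun n : ℕ => (fun T => A.comp T - T.comp B)^[n] T₀)
        = fun n : ℕ => (α - β) ^ n * φ T₀ := funext fun n => key n
    rwa [heq] at this
  -- but that set is not dense
  set c := φ T₀ with hc
  by_cases hc0 : c = 0
  · obtain ⟨n, hlt⟩ := hd2.exists_dist_lt (1 : ℂ) (by norm_num : (0:ℝ) < 1/2)
    rw [hc0, mul_zero] at hlt
    simp [Complex.dist_eq] at hlt
    norm_num at hlt
  · have hcpos : (0:ℝ) < ‖c‖ := norm_pos_iff.mpr hc0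
    by_cases hlam : ‖α - β‖ ≤ 1
    · obtain ⟨n, hlt⟩ := hd2.exists_dist_lt ((2:ℂ) * c) (half_pos hcpos)
      have hnorm : ‖(α - β) ^ n * c‖ ≤ ‖c‖ := by
        rw [norm_mul, norm_pow]
        calc ‖α - β‖ ^ n * ‖c‖ ≤ 1 ^ n * ‖c‖ := by
              gcongr
        _ = ‖c‖ := by ring
      have : dist ((2:ℂ) * c) ((α - β) ^ n * c) ≥ ‖c‖ := by
        rw [dist_eq_norm]
        calc ‖(2:ℂ) * c - (α - β) ^ n * c‖ ≥ ‖(2:ℂ) * c‖ - ‖(α - β) ^ n * c‖ :=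
              norm_sub_norm_le _ _
        _ ≥ 2 * ‖c‖ - ‖c‖ := by
              rw [norm_mul]
              simp only [Complex.norm_ofNat]
              linarith [hnorm]
        _ = ‖c‖ := by ring
      linarith
    · push_neg at hlam
      obtain ⟨n, hlt⟩ := hd2.exists_dist_lt (c / 2) (by positivity : (0:ℝ) < ‖c‖ / 4)
      have hnorm : ‖(α - β) ^ n * c‖ ≥ ‖c‖ := by
        rw [norm_mul, norm_pow]
        calc ‖α - β‖ ^ n * ‖c‖ ≥ 1 ^ n * ‖c‖ := by
              gcongr

        _ = ‖c‖ := by ring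
      have : dist (c / 2) ((α - β) ^ n * c) ≥ ‖c‖ / 2 := by
        rw [dist_eq_norm]
        calc ‖c / 2 - (α - β) ^ n * c‖ ≥ ‖(α - β) ^ n * c‖ - ‖c / 2‖ := by
              rw [norm_sub_rev]; exact norm_sub_norm_le _ _
        _ ≥ ‖c‖ - ‖c‖ / 2 := by
              have : ‖c / 2‖ = ‖c‖ / 2 := by
                rw [norm_div]; norm_num
              linarith [hnorm, this.le]
        _ = ‖c‖ / 2 := by ring
      linarith
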